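/- Let f : ℝⁿ → ℝ be a convex function, x ∈ ℝⁿ and δ > 0. Then there exists ε ≥ 0 such that convexHull ℝ (⋃_{y ∈ closedBall(x, δ)} ∂f(y)) ⊆ ∂_ε f(x). (With δ = ρ/(2L), L a Lipschitz constant of f at x, the left-hand side is the normalized Goldstein ρ-subdifferential G_ρ f(x).) -/

import Mathlib

open scoped RealInnerProductSpace

/-- The ε-subdifferential of `g` at `x`. -/
def epsSubdiff {n : ℕ} (g : EuclideanSpace ℝ (Fin n) → ℝ) (ε : ℝ)
    (x : EuclideanSpace ℝ (Fin n)) : Set (EuclideanSpace ℝ (Fin n)) :=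
  {ξ | ∀ y, g y ≥ g x + ⟪ξ, y - x⟫ - ε}

/-- The subdifferential of `g` at `x`. -/
def subdiff {n : ℕ} (g : EuclideanSpace ℝ (Fin n) → ℝ)
    (x : EuclideanSpace ℝ (Fin n)) : Set (EuclideanSpace ℝ (Fin n)) :=
  {ξ | ∀ y, g y ≥ g x + ⟪ξ, y - x⟫}

/-- The t-spherical subdifferential of `g` at `x`. -/
def sphSubdiff {n : ℕ} (g : EuclideanSpace ℝ (Fin n) → ℝ) (t : ℝ)
    (x : EuclideanSpace ℝ (Fin n)) : Set (EuclideanSpace ℝ (Fin n)) :=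
  convexHull ℝ {ξ | ∃ d : EuclideanSpace ℝ (Fin n), ‖d‖ = 1 ∧ ξ ∈ subdiff g (x + t • d)}

lemma epsSubdiff_convex {n : ℕ} (g : EuclideanSpace ℝ (Fin n) → ℝ) (ε : ℝ)
    (x : EuclideanSpace ℝ (Fin n)) : Convex ℝ (epsSubdiff g ε x) := by
  intro ξ hξ η hη a b ha hb hab
  intro y
  have h1 := hξ y
  have h2 := hη y
  have key : ⟪a • ξ + b • η, y - x⟫ = a * ⟪ξ, y - x⟫ + b * ⟪η, y - x⟫ := by
    simp [inner_add_left, inner_smul_left]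
  rw [ge_iff_le] at h1 h2 ⊢
  rw [key]
  have hb1 : b = 1 - a := by linarith
  subst hb1
  linarith [mul_le_mul_of_nonneg_left h1 ha, mul_le_mul_of_nonneg_left h2 hb]

theorem goldstein_subset_eps_subdiff {n : ℕ}
    (f : EuclideanSpace ℝ (Fin n) → ℝ) (hf : ConvexOn ℝ Set.univ f)
    (x : EuclideanSpace ℝ (Fin n)) (δ : ℝ) (hδ : 0 < δ) :
    ∃ ε : ℝ, 0 ≤ ε ∧
      convexHull ℝ (⋃ y ∈ Metric.closedBall x δ, subdiff f y) ⊆ epsSubdiff f ε x := by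
  -- f is continuous, hence bounded on closedBall x (2δ)
  have hcont : ContinuousOn f (Metric.closedBall x (2 * δ)) :=
    (hf.continuousOn isOpen_univ).mono (Set.subset_univ _)
  have hK : IsCompact (Metric.closedBall x (2 * δ)) := isCompact_closedBall x _
  have hne : (Metric.closedBall x (2 * δ)).Nonempty :=
    ⟨x, Metric.mem_closedBall_self (by linarith)⟩
  obtain ⟨zM, hzM, hMmax⟩ := hK.exists_isMaxOn hne hcont
  obtain ⟨zm, hzm, hmmin⟩ := hK.exists_isMinOn hne hcont
  set M := f zM
  set m := f zm
  have hmM : m ≤ M := hmmin hzM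
  refine ⟨2 * (M - m), by linarith, ?_⟩
  refine convexHull_min ?_ (epsSubdiff_convex f _ x)
  rintro ξ hξ
  simp only [Set.mem_iUnion] at hξ
  obtain ⟨y, hy, hξy⟩ := hξ
  have hyx : ‖y - x‖ ≤ δ := by
    rw [← dist_eq_norm]; exact Metric.mem_closedBall.mp hy
  -- bound on ‖ξ‖
  have hy2 : y ∈ Metric.closedBall x (2 * δ) := by
    rw [Metric.mem_closedBall, dist_eq_norm]; linarith
  have hx2 : x ∈ Metric.closedBall x (2 * δ) := Metric.mem_closedBall_self (by linarith)
  have hnorm : δ * ‖ξ‖ ≤ M - m := by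
    rcases eq_or_ne ξ 0 with rfl | hξ0
    · simp; linarith
    · set z := y + (δ / ‖ξ‖) • ξ with hz
      have hξpos : (0:ℝ) < ‖ξ‖ := norm_pos_iff.mpr hξ0
      have hz2 : z ∈ Metric.closedBall x (2 * δ) := by
        rw [Metric.mem_closedBall, dist_eq_norm]
        have : z - x = (y - x) + (δ / ‖ξ‖) • ξ := by rw [hz]; abel
        rw [this]
        have : ‖(δ / ‖ξ‖) • ξ‖ = δ := by
          rw [norm_smul, Real.norm_eq_abs, abs_of_pos (by positivity)]
          field_simp
        calc ‖(y - x) + (δ / ‖ξ‖) • ξ‖ ≤ ‖y - x‖ + ‖(δ / ‖ξ‖) • ξ‖ := norm_add_le _ _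
          _ ≤ δ + δ := by rw [this]; linarith
          _ = 2 * δ := by ring
      have hsub := hξy z
      have hinner : ⟪ξ, z - y⟫ = δ * ‖ξ‖ := by
        have : z - y = (δ / ‖ξ‖) • ξ := by rw [hz]; abel
        rw [this, real_inner_smul_right, real_inner_self_eq_norm_sq]
        field_simp
      rw [hinner] at hsub
      have h1 : f z ≤ M := hMmax hz2
      have h2 : m ≤ f y := hmmin hy2
      linarith
  -- show ξ ∈ epsSubdiff
  intro z
  have hsub := hξy z
  have hsubx := hξy x
  have hfx : f x ≤ M := hMmax hx2
  have hfy : m ≤ f y := hmmin hy2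
  have hinner1 : ⟪ξ, z - y⟫ = ⟪ξ, z - x⟫ + ⟪ξ, x - y⟫ := by
    rw [← inner_add_right]; congr 1; abel
  have hcs : |⟪ξ, x - y⟫| ≤ ‖ξ‖ * ‖x - y‖ := abs_real_inner_le_norm _ _
  have hxy : ‖x - y‖ ≤ δ := by rw [← neg_sub, norm_neg]; exact hyx
  have hbound : |⟪ξ, x - y⟫| ≤ M - m := by
    calc |⟪ξ, x - y⟫| ≤ ‖ξ‖ * ‖x - y‖ := hcs
      _ ≤ ‖ξ‖ * δ := by
          apply mul_le_mul_of_nonneg_left hxy (norm_nonneg _)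
      _ = δ * ‖ξ‖ := by ring
      _ ≤ M - m := hnorm
  have habs := abs_le.mp hbound
  rw [hinner1] at hsub
  have : f z ≥ f y + ⟪ξ, z - x⟫ + ⟪ξ, x - y⟫ := by linarith
  have hfyx : f y ≥ f x - (M - m) := by linarith
  linarith [habs.1, habs.2]
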